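/- Let n ≥ 1. Then the polynomial L_n(x) := Σ_{σ ∈ S_n} x^{L(σ)} is symmetric of degree ⌊n²/4⌋; i.e., for every k with 0 ≤ k ≤ ⌊n²/4⌋, the number of permutations σ ∈ S_n with L(σ) = k equals the number of permutations σ ∈ S_n with L(σ) = ⌊n²/4⌋ − k. -/
import Mathlib

namespace OddLength

/-- The odd length of a permutation `σ ∈ S_n`: the number of inversions `(i,j)`, `i < j`,
`σ(i) > σ(j)`, whose entries have different parities. -/
def oddLength {n : ℕ} (σ : Equiv.Perm (Fin n)) : ℕ :=
  (Finset.univ.filter fun p : Fin n × Fin n =>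
    p.1 < p.2 ∧ σ p.2 < σ p.1 ∧ (p.1 : ℕ) % 2 ≠ (p.2 : ℕ) % 2).card

def pairSet (n : ℕ) : Finset (Fin n × Fin n) :=
  Finset.univ.filter fun p => p.1 < p.2 ∧ (p.1 : ℕ) % 2 ≠ (p.2 : ℕ) % 2

lemma oddLength_eq {n : ℕ} (σ : Equiv.Perm (Fin n)) :
    oddLength σ = ((pairSet n).filter fun p => σ p.2 < σ p.1).card := by
  unfold oddLength pairSet
  rw [Finset.filter_filter]
  congr 1
  ext p
  simp only [Finset.mem_filter]
  tauto

lemma oddLength_add {n : ℕ} (σ : Equiv.Perm (Fin n)) :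
    oddLength σ + oddLength (Fin.revPerm * σ) = (pairSet n).card := by
  rw [oddLength_eq, oddLength_eq]
  have h2 : ((pairSet n).filter fun p : Fin n × Fin n =>
      (Fin.revPerm * σ : Equiv.Perm (Fin n)) p.2 < (Fin.revPerm * σ : Equiv.Perm (Fin n)) p.1)
      = ((pairSet n).filter fun p => ¬ σ p.2 < σ p.1) := by
    apply Finset.filter_congr
    intro p hp
    simp only [pairSet, Finset.mem_filter] at hp
    have hne : σ p.1 ≠ σ p.2 := fun h => absurd (σ.injective h) (ne_of_lt hp.2.1)
    simp only [Equiv.Perm.mul_apply, Fin.revPerm_apply, Fin.rev_lt_rev]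
    constructor
    · intro h h'; exact absurd (lt_trans h h') (lt_irrefl _)
    · intro h
      rcases lt_or_ge (σ p.1) (σ p.2) with h' | h'
      · exact h'
      · exact absurd (lt_of_le_of_ne h' (Ne.symm hne)) h
  rw [h2]
  exact Finset.card_filter_add_card_filter_not _

lemma half_mul (n : ℕ) : ((n + 1) / 2) * (n / 2) = n ^ 2 / 4 := by
  rcases Nat.even_or_odd n with ⟨m, rfl⟩ | ⟨m, rfl⟩
  · have h1 : (m + m + 1) / 2 = m := by omega
    have h2 : (m + m) / 2 = m := by omega
    have h3 : (m + m) ^ 2 = 4 * (m * m) := by ring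
    rw [h1, h2, h3, Nat.mul_div_cancel_left _ (by norm_num)]
  · have h1 : (2 * m + 1 + 1) / 2 = m + 1 := by omega
    have h2 : (2 * m + 1) / 2 = m := by omega
    have h3 : (2 * m + 1) ^ 2 = 4 * ((m + 1) * m) + 1 := by ring
    rw [h1, h2, h3]
    generalize (m + 1) * m = k
    omega

lemma pairSet_card (n : ℕ) : (pairSet n).card = n ^ 2 / 4 := by
  rw [← half_mul, ← Finset.card_range ((n+1)/2), ← Finset.card_range (n/2),
    ← Finset.card_product]
  refine Finset.card_bij'
    (fun p _ =>
      (if (p.1 : ℕ) % 2 = 0 then (p.1 : ℕ) / 2 else (p.2 : ℕ) / 2,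
       if (p.1 : ℕ) % 2 = 0 then (p.2 : ℕ) / 2 else (p.1 : ℕ) / 2))
    (fun q hq =>
      (⟨min (2 * q.1) (2 * q.2 + 1), by
          simp only [Finset.mem_product, Finset.mem_range] at hq; omega⟩,
       ⟨max (2 * q.1) (2 * q.2 + 1), by
          simp only [Finset.mem_product, Finset.mem_range] at hq; omega⟩))
    ?_ ?_ ?_ ?_
  · intro p hp
    simp only [pairSet, Finset.mem_filter, Fin.lt_def] at hp
    simp only [Finset.mem_product, Finset.mem_range]
    have h1 := p.1.isLt
    have h2 := p.2.isLt
    split <;> omega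
  · intro q hq
    simp only [Finset.mem_product, Finset.mem_range] at hq
    simp only [pairSet, Finset.mem_filter, Fin.lt_def, Finset.mem_univ, true_and]
    omega
  · rintro ⟨⟨a, ha⟩, ⟨b, hb⟩⟩ hp
    simp only [pairSet, Finset.mem_filter, Fin.lt_def] at hp
    obtain ⟨-, hlt, hpar⟩ := hp
    dsimp only at hlt hpar ⊢
    split <;> simp only [Prod.mk.injEq, Fin.mk.injEq] <;> constructor <;> omega
  · rintro ⟨q1, q2⟩ hq
    simp only [Finset.mem_product, Finset.mem_range] at hq
    dsimp only
    split <;> simp only [Prod.mk.injEq] <;> constructor <;> omega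

lemma oddLength_le {n : ℕ} (σ : Equiv.Perm (Fin n)) : oddLength σ ≤ n ^ 2 / 4 := by
  have := oddLength_add σ
  rw [pairSet_card] at this
  omega

lemma oddLength_compl {n : ℕ} (σ : Equiv.Perm (Fin n)) :
    oddLength (Fin.revPerm * σ) = n ^ 2 / 4 - oddLength σ := by
  have := oddLength_add σ
  rw [pairSet_card] at this
  omega

/-- The generating polynomial `L_n(x) = Σ_{σ ∈ S_n} x^{L(σ)}` is symmetric
of degree `⌊n²/4⌋`: all odd lengths are at most `⌊n²/4⌋`, the value `⌊n²/4⌋` is attained,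
and for every `0 ≤ k ≤ ⌊n²/4⌋` the number of permutations with odd length `k` equals the
number of permutations with odd length `⌊n²/4⌋ - k`. -/
theorem statement10 (n : ℕ) (hn : 1 ≤ n) :
    (∀ σ : Equiv.Perm (Fin n), oddLength σ ≤ n ^ 2 / 4) ∧
    (∃ σ : Equiv.Perm (Fin n), oddLength σ = n ^ 2 / 4) ∧
    (∀ k : ℕ, k ≤ n ^ 2 / 4 →
      (Finset.univ.filter fun σ : Equiv.Perm (Fin n) => oddLength σ = k).card =
      (Finset.univ.filter fun σ : Equiv.Perm (Fin n) =>
        oddLength σ = n ^ 2 / 4 - k).card) := by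
  have hone : oddLength (1 : Equiv.Perm (Fin n)) = 0 := by
    unfold oddLength
    rw [Finset.card_eq_zero, Finset.filter_eq_empty_iff]
    intro p _
    simp only [Equiv.Perm.one_apply]
    rintro ⟨h1, h2, -⟩
    exact absurd (lt_trans h1 h2) (lt_irrefl _)
  have hrev : (Fin.revPerm : Equiv.Perm (Fin n)) * Fin.revPerm = 1 := by
    ext i
    simp [Fin.rev_rev]
  refine ⟨oddLength_le, ⟨Fin.revPerm * 1, by rw [oddLength_compl, hone, Nat.sub_zero]⟩, ?_⟩
  intro k hk
  refine Finset.card_bij' (fun σ _ => Fin.revPerm * σ) (fun τ _ => Fin.revPerm * τ)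
    ?_ ?_ ?_ ?_
  · intro σ hσ
    simp only [Finset.mem_filter, Finset.mem_univ, true_and] at hσ ⊢
    rw [oddLength_compl, hσ]
  · intro τ hτ
    simp only [Finset.mem_filter, Finset.mem_univ, true_and] at hτ ⊢
    have := oddLength_le τ
    rw [oddLength_compl, hτ]
    omega
  · intro σ _
    show Fin.revPerm * (Fin.revPerm * σ) = σ
    rw [← mul_assoc, hrev, one_mul]
  · intro τ _
    show Fin.revPerm * (Fin.revPerm * τ) = τ
    rw [← mul_assoc, hrev, one_mul]

end OddLength
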